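/- (Proposition 3.2, case (ii): strong mean reversion.) Fix an integer N ≥ 2, a time horizon T > 0, and parameters q, ε, c with q ≥ 0, c ≥ 0 and q² ≤ ε. For each a > 0 let K_a denote the unique C¹ solution on [0,T] of K'(t) = 2βK(t) + γ_N K(t)² − λ with K(T) = c, where β = a + (1 − 1/N)q, and form the corresponding quantities K̄, K̲, γ̲ and C. Then there exists a₀ > 0 such that for every a > a₀ the convergence condition ((1 − e^{−2Tγ̲})/γ̲) · C < 1 holds. -/

import Mathlib

open Set MeasureTheory intervalIntegral

/-- If `h' t ≥ g t * h t` on `[0,T]` and `h T ≤ 0`, then `h ≤ 0` on `[0,T]`. -/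
lemma sign_preserve (T : ℝ) (hT : 0 < T) (h h' g : ℝ → ℝ)
    (hg : ContinuousOn g (Icc 0 T))
    (hd : ∀ t ∈ Icc (0:ℝ) T, HasDerivAt h (h' t) t)
    (hge : ∀ t ∈ Icc (0:ℝ) T, g t * h t ≤ h' t)
    (hend : h T ≤ 0) :
    ∀ t ∈ Icc (0:ℝ) T, h t ≤ 0 := by
  have huIcc : uIcc (0:ℝ) T = Icc 0 T := uIcc_of_le hT.le
  set G : ℝ → ℝ := fun t => ∫ s in (0:ℝ)..t, g s with hG
  set F : ℝ → ℝ := fun t => h t * Real.exp (-(G t)) with hF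
  have hhc : ContinuousOn h (Icc 0 T) := fun t ht => ((hd t ht).continuousAt).continuousWithinAt
  have hgint : IntegrableOn g (uIcc 0 T) := by
    rw [huIcc]; exact hg.integrableOn_compact isCompact_Icc
  have hGcont : ContinuousOn G (Icc 0 T) := by
    have := continuousOn_primitive_interval (f := g) (a := (0:ℝ)) (b := T) (μ := volume) hgint
    rwa [huIcc] at this
  have hFcont : ContinuousOn F (Icc 0 T) :=
    hhc.mul ((hGcont.neg).rexp)
  have hderiv : ∀ t ∈ Ioo (0:ℝ) T,
      HasDerivAt F ((h' t - g t * h t) * Real.exp (-(G t))) t := by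
    intro t ht
    have ht' : t ∈ Icc (0:ℝ) T := Ioo_subset_Icc_self ht
    have hnhds : Icc (0:ℝ) T ∈ nhds t := Icc_mem_nhds ht.1 ht.2
    have hgc : ContinuousAt g t := hg.continuousAt hnhds
    have hgi : IntervalIntegrable g volume 0 t := by
      apply ContinuousOn.intervalIntegrable
      apply hg.mono
      rw [uIcc_of_le ht.1.le]
      exact Icc_subset_Icc le_rfl ht.2.le
    have hmeas : StronglyMeasurableAtFilter g (nhds t) :=
      ⟨Icc 0 T, hnhds, (hg.aestronglyMeasurable measurableSet_Icc)⟩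
    have hGd : HasDerivAt G (g t) t := integral_hasDerivAt_right hgi hmeas hgc
    have hEd : HasDerivAt (fun u => Real.exp (-(G u))) (Real.exp (-(G t)) * (-(g t))) t := by
      have := (hGd.neg).exp
      simpa using this
    have := (hd t ht').mul hEd
    refine this.congr_deriv ?_
    ring
  have hmono : MonotoneOn F (Icc 0 T) := by
    apply monotoneOn_of_deriv_nonneg (convex_Icc 0 T) hFcont
    · intro t ht
      rw [interior_Icc] at ht
      exact ((hderiv t ht).differentiableAt).differentiableWithinAt
    · intro t ht
      rw [interior_Icc] at ht
      rw [(hderiv t ht).deriv]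
      have h1 := hge t (Ioo_subset_Icc_self ht)
      exact mul_nonneg (by linarith) (Real.exp_pos _).le
  intro t ht
  have hTm : T ∈ Icc (0:ℝ) T := ⟨hT.le, le_rfl⟩
  have := hmono ht hTm ht.2
  have hFT : F T ≤ 0 := mul_nonpos_of_nonpos_of_nonneg hend (Real.exp_pos _).le
  have hFt : F t ≤ 0 := le_trans this hFT
  have h2 : h t * Real.exp (-(G t)) ≤ 0 := hFt
  nlinarith [Real.exp_pos (-(G t))]

set_option maxHeartbeats 1000000 in
/-- Proposition 3.2, case (ii): strong mean reversion. With `N`, `T`,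
`q`, `ε`, `c` fixed, there is `a₀ > 0` such that for every `a > a₀`, the C¹ solution
`K` on `[0,T]` of the Riccati terminal value problem (with `β = a + (1 − 1/N)q`)
satisfies the convergence condition `((1 − e^{−2Tγ̲})/γ̲) · C < 1`. -/
theorem convergence_condition_strong_mean_reversion
    (N : ℕ) (hN : 2 ≤ N) (T q ε c : ℝ)
    (hT : 0 < T) (hq : 0 ≤ q) (hc : 0 ≤ c) (hqε : q ^ 2 ≤ ε) :
    ∃ a₀ > (0 : ℝ), ∀ a : ℝ, a₀ < a → ∀ K : ℝ → ℝ,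
      (∀ t ∈ Icc (0 : ℝ) T, HasDerivAt K
        (2 * (a + (1 - 1 / (N : ℝ)) * q) * K t
          + (1 - 1 / (N : ℝ)) ^ 2 * K t ^ 2 - (ε - q ^ 2)) t) →
      K T = c →
      (let Kbar := sSup (K '' Icc (0 : ℝ) T);
       let Kmin := sInf (K '' Icc (0 : ℝ) T);
       let glo := a + (1 - 1 / (N : ℝ)) * q + (1 - 1 / (N : ℝ)) ^ 2 * Kmin;
       let C := (1 - 1 / (N : ℝ)) ^ 2 *
         ((1 - 1 / (N : ℝ)) ^ 2 * Kbar ^ 2 +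
          (q + (1 - 1 / (N : ℝ)) * Kbar) ^ 2 *
            ((1 - Real.exp (-(2 * T * glo))) / glo * (1 - 1 / (N : ℝ)) ^ 4 * Kbar ^ 2 + 2));
       (1 - Real.exp (-(2 * T * glo))) / glo * C < 1) := by
  have hlam : 0 ≤ ε - q ^ 2 := sub_nonneg.mpr hqε
  set ν : ℝ := 1 - 1 / (N : ℝ) with hνdef
  have hN2 : (2:ℝ) ≤ (N:ℝ) := by exact_mod_cast hN
  have hν0 : (0:ℝ) < ν := by
    have : 1 / (N : ℝ) ≤ 1 / 2 := by
      apply one_div_le_one_div_of_le <;> linarith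
    simp only [hνdef]; linarith
  have hν1 : ν ≤ 1 := by
    have : 0 < 1 / (N : ℝ) := by positivity
    simp only [hνdef]; linarith
  set M₀ : ℝ := max c ((ε - q ^ 2) / 2) with hM₀def
  set C₀ : ℝ := M₀ ^ 2 + (q + M₀) ^ 2 * (M₀ ^ 2 + 2) with hC₀def
  have hM₀0 : 0 ≤ M₀ := le_trans hc (le_max_left _ _)
  have hC₀0 : 0 ≤ C₀ := by positivity
  refine ⟨max 1 C₀, lt_of_lt_of_le one_pos (le_max_left _ _), ?_⟩
  intro a ha K hK hKT
  have ha1 : (1:ℝ) < a := lt_of_le_of_lt (le_max_left _ _) ha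
  have haC₀ : C₀ < a := lt_of_le_of_lt (le_max_right _ _) ha
  have ha0 : (0:ℝ) < a := by linarith
  have hβ : (0:ℝ) < a + ν * q := by nlinarith
  have hβ1 : (1:ℝ) ≤ a + ν * q := by nlinarith
  set M : ℝ := max c ((ε - q ^ 2) / (2 * (a + ν * q))) with hMdef
  have hMc : c ≤ M := le_max_left _ _
  have hMdiv : (ε - q ^ 2) / (2 * (a + ν * q)) ≤ M := le_max_right _ _
  have h2βM : ε - q ^ 2 ≤ 2 * (a + ν * q) * M := by
    rw [div_le_iff₀ (by linarith)] at hMdiv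
    linarith [hMdiv]
  have hMM₀ : M ≤ M₀ := by
    rw [hMdef, hM₀def]
    apply max_le (le_max_left _ _)
    apply le_trans _ (le_max_right c ((ε - q ^ 2) / 2))
    rw [div_le_div_iff₀ (by linarith) (by norm_num)]
    nlinarith
  have hKcont : ContinuousOn K (Icc 0 T) :=
    fun t ht => ((hK t ht).continuousAt).continuousWithinAt
  -- lower bound: 0 ≤ K on [0,T]
  have hlo : ∀ t ∈ Icc (0:ℝ) T, 0 ≤ K t := by
    have := sign_preserve T hT (fun t => -K t)
      (fun t => -(2 * (a + ν * q) * K t + ν ^ 2 * K t ^ 2 - (ε - q ^ 2)))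
      (fun t => 2 * (a + ν * q) + ν ^ 2 * K t)
      (by exact (continuousOn_const).add (continuousOn_const.mul hKcont))
      (fun t ht => (hK t ht).neg)
      (fun t ht => by
        have key : (2 * (a + ν * q) + ν ^ 2 * K t) * (-K t)
            = -(2 * (a + ν * q) * K t + ν ^ 2 * K t ^ 2) := by ring
        rw [key]; linarith)
      (by simp [hKT, hc])
    intro t ht
    have := this t ht
    simpa using this
  -- upper bound: K ≤ M on [0,T]
  have hup : ∀ t ∈ Icc (0:ℝ) T, K t ≤ M := by
    have := sign_preserve T hT (fun t => K t - M)
      (fun t => 2 * (a + ν * q) * K t + ν ^ 2 * K t ^ 2 - (ε - q ^ 2))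
      (fun t => 2 * (a + ν * q) + ν ^ 2 * (K t + M))
      (by exact (continuousOn_const).add (continuousOn_const.mul (hKcont.add continuousOn_const)))
      (fun t ht => (hK t ht).sub_const M)
      (fun t ht => by
        have key : (2 * (a + ν * q) + ν ^ 2 * (K t + M)) * (K t - M)
            = 2 * (a + ν * q) * K t + ν ^ 2 * K t ^ 2
              - (2 * (a + ν * q) * M + ν ^ 2 * M ^ 2) := by ring
        have hm2 : 0 ≤ ν ^ 2 * M ^ 2 := mul_nonneg (sq_nonneg _) (sq_nonneg _)
        rw [key]; linarith)
      (by simp [hKT]; linarith)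
    intro t ht
    have := this t ht
    simpa using sub_nonpos.mp this
  -- bounds on sSup / sInf
  have hTmem : T ∈ Icc (0:ℝ) T := ⟨hT.le, le_rfl⟩
  have hne : (K '' Icc (0:ℝ) T).Nonempty := ⟨K T, T, hTmem, rfl⟩
  have hbddA : BddAbove (K '' Icc (0:ℝ) T) := by
    refine ⟨M, ?_⟩; rintro y ⟨t, ht, rfl⟩; exact hup t ht
  dsimp only
  set Kbar : ℝ := sSup (K '' Icc (0:ℝ) T) with hKb
  set Kmin : ℝ := sInf (K '' Icc (0:ℝ) T) with hKm
  have hKbarM : Kbar ≤ M := by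
    apply csSup_le hne; rintro y ⟨t, ht, rfl⟩; exact hup t ht
  have hKbarc : c ≤ Kbar := by
    rw [← hKT]; exact le_csSup hbddA ⟨T, hTmem, rfl⟩
  have hKbar0 : 0 ≤ Kbar := le_trans hc hKbarc
  have hKminl : 0 ≤ Kmin := by
    apply le_csInf hne; rintro y ⟨t, ht, rfl⟩; exact hlo t ht
  have hKbarM₀ : Kbar ≤ M₀ := le_trans hKbarM hMM₀
  set glo : ℝ := a + ν * q + ν ^ 2 * Kmin with hglodef
  have hgloa : a ≤ glo := by
    have h1 : 0 ≤ ν * q := mul_nonneg hν0.le hq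
    have h2 : 0 ≤ ν ^ 2 * Kmin := mul_nonneg (sq_nonneg ν) hKminl
    rw [hglodef]; linarith
  have hglo0 : (0:ℝ) < glo := lt_of_lt_of_le ha0 hgloa
  set E : ℝ := (1 - Real.exp (-(2 * T * glo))) / glo with hEdef
  have hexp1 : Real.exp (-(2 * T * glo)) ≤ 1 := by
    rw [← Real.exp_zero]
    apply Real.exp_le_exp.mpr
    nlinarith [mul_pos hT hglo0]
  have hE0 : 0 ≤ E := by
    apply div_nonneg (by linarith) hglo0.le
  have hE1a : E ≤ 1 / a := by
    apply div_le_div₀ (by positivity) (by linarith [Real.exp_pos (-(2 * T * glo))]) ha0 hgloa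
  have hE1 : E ≤ 1 := le_trans hE1a (by rw [div_le_one ha0]; linarith)
  -- bound C by C₀
  have hν2 : ν ^ 2 ≤ 1 := pow_le_one₀ hν0.le hν1
  have hν4 : ν ^ 4 ≤ 1 := pow_le_one₀ hν0.le hν1
  have hb2 : Kbar ^ 2 ≤ M₀ ^ 2 := pow_le_pow_left₀ hKbar0 hKbarM₀ 2
  have hνb : ν * Kbar ≤ M₀ := by nlinarith
  have hqb : (q + ν * Kbar) ^ 2 ≤ (q + M₀) ^ 2 :=
    pow_le_pow_left₀ (add_nonneg hq (mul_nonneg hν0.le hKbar0)) (by linarith) 2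
  have hEν4 : E * ν ^ 4 ≤ 1 := mul_le_one₀ hE1 (by positivity) hν4
  have hEν40 : 0 ≤ E * ν ^ 4 := mul_nonneg hE0 (by positivity)
  have hinner : E * ν ^ 4 * Kbar ^ 2 ≤ M₀ ^ 2 := by
    calc E * ν ^ 4 * Kbar ^ 2 ≤ 1 * Kbar ^ 2 :=
          mul_le_mul_of_nonneg_right hEν4 (sq_nonneg _)
      _ = Kbar ^ 2 := one_mul _
      _ ≤ M₀ ^ 2 := hb2
  have hinner0 : 0 ≤ E * ν ^ 4 * Kbar ^ 2 := mul_nonneg hEν40 (sq_nonneg _)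
  set C : ℝ := ν ^ 2 * (ν ^ 2 * Kbar ^ 2 + (q + ν * Kbar) ^ 2 * (E * ν ^ 4 * Kbar ^ 2 + 2))
    with hCdef
  have ht1 : ν ^ 2 * Kbar ^ 2 ≤ M₀ ^ 2 := by
    calc ν ^ 2 * Kbar ^ 2 ≤ 1 * Kbar ^ 2 := mul_le_mul_of_nonneg_right hν2 (sq_nonneg _)
      _ = Kbar ^ 2 := one_mul _
      _ ≤ M₀ ^ 2 := hb2
  have ht2 : (q + ν * Kbar) ^ 2 * (E * ν ^ 4 * Kbar ^ 2 + 2) ≤ (q + M₀) ^ 2 * (M₀ ^ 2 + 2) :=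
    mul_le_mul hqb (by linarith) (by linarith) (sq_nonneg _)
  have hsum0 : 0 ≤ ν ^ 2 * Kbar ^ 2 + (q + ν * Kbar) ^ 2 * (E * ν ^ 4 * Kbar ^ 2 + 2) := by
    have h5 : 0 ≤ (q + ν * Kbar) ^ 2 * (E * ν ^ 4 * Kbar ^ 2 + 2) :=
      mul_nonneg (sq_nonneg _) (by linarith)
    have h6 : 0 ≤ ν ^ 2 * Kbar ^ 2 := mul_nonneg (sq_nonneg _) (sq_nonneg _)
    linarith
  have hCC₀ : C ≤ C₀ := by
    rw [hCdef, hC₀def]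
    calc ν ^ 2 * (ν ^ 2 * Kbar ^ 2 + (q + ν * Kbar) ^ 2 * (E * ν ^ 4 * Kbar ^ 2 + 2))
        ≤ 1 * (ν ^ 2 * Kbar ^ 2 + (q + ν * Kbar) ^ 2 * (E * ν ^ 4 * Kbar ^ 2 + 2)) :=
          mul_le_mul_of_nonneg_right hν2 hsum0
      _ = ν ^ 2 * Kbar ^ 2 + (q + ν * Kbar) ^ 2 * (E * ν ^ 4 * Kbar ^ 2 + 2) := one_mul _
      _ ≤ M₀ ^ 2 + (q + M₀) ^ 2 * (M₀ ^ 2 + 2) := add_le_add ht1 ht2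
  have hC0 : 0 ≤ C := mul_nonneg (sq_nonneg _) hsum0
  -- conclude
  show E * C < 1
  have h1 : E * C ≤ E * C₀ := mul_le_mul_of_nonneg_left hCC₀ hE0
  have h2 : E * C₀ ≤ (1 / a) * C₀ := mul_le_mul_of_nonneg_right hE1a hC₀0
  have h3 : (1 / a) * C₀ < 1 := by
    rw [one_div, inv_mul_eq_div, div_lt_one ha0]
    exact haC₀
  exact lt_of_le_of_lt (h1.trans h2) h3
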